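/- There exists a constant C > 0 such that for every integer N ≥ 3, writing r = ln N and J(z) = ∫₂^N e^{2πizx} / ln x dx for real z, one has: |J(z)| ≤ C · N / r whenever |z| ≤ 1/N, and |J(z)| ≤ C / (|z| · r) whenever 1/N < |z| ≤ N^(−1/2). -/

import Mathlib

open Real intervalIntegral

/-- `vinogradovJ N z = ∫₂^N e^{2πizx} / ln x dx`. -/
noncomputable def vinogradovJ (N : ℕ) (z : ℝ) : ℂ :=
  ∫ x in (2 : ℝ)..(N : ℝ), Complex.exp ((2 * Real.pi * z * x : ℝ) * Complex.I) / (Real.log x : ℂ)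

namespace VinJ

noncomputable def f (z x : ℝ) : ℂ :=
  Complex.exp ((2 * Real.pi * z * x : ℝ) * Complex.I) / (Real.log x : ℂ)

lemma log_pos2 {x : ℝ} (hx : 2 ≤ x) : 0 < Real.log x :=
  Real.log_pos (by linarith)

lemma norm_f {z x : ℝ} (hx : 2 ≤ x) : ‖f z x‖ = (Real.log x)⁻¹ := by
  unfold f
  rw [norm_div, Complex.norm_exp_ofReal_mul_I, Complex.norm_real, Real.norm_eq_abs,
    abs_of_pos (log_pos2 hx), one_div]

lemma uIcc_subset {a b : ℝ} (ha : 2 ≤ a) (hb : 2 ≤ b) : Set.uIcc a b ⊆ Set.Ici 2 := by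
  intro x hx
  exact le_trans (le_inf ha hb) hx.1

lemma contOn (z : ℝ) : ContinuousOn (f z) (Set.Ici 2) := by
  unfold f
  apply ContinuousOn.div
  · fun_prop
  · apply Complex.continuous_ofReal.comp_continuousOn
    apply Real.continuousOn_log.mono
    intro x hx
    simp only [Set.mem_Ici] at hx
    simp only [Set.mem_compl_iff, Set.mem_singleton_iff]
    intro h; rw [h] at hx; norm_num at hx
  · intro x hx
    simp only [ne_eq, Complex.ofReal_eq_zero]
    exact ne_of_gt (log_pos2 hx)

lemma f_int {z a b : ℝ} (ha : 2 ≤ a) (hb : 2 ≤ b) :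
    IntervalIntegrable (f z) MeasureTheory.volume a b :=
  ((contOn z).mono (uIcc_subset ha hb)).intervalIntegrable

lemma invlog_contOn : ContinuousOn (fun x : ℝ => (Real.log x)⁻¹) (Set.Ici 2) := by
  apply ContinuousOn.inv₀
  · apply Real.continuousOn_log.mono
    intro x hx
    simp only [Set.mem_Ici] at hx
    simp only [Set.mem_compl_iff, Set.mem_singleton_iff]
    intro h; rw [h] at hx; norm_num at hx
  · exact fun x hx => ne_of_gt (log_pos2 hx)

lemma invlog_int {a b : ℝ} (ha : 2 ≤ a) (hb : 2 ≤ b) :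
    IntervalIntegrable (fun x : ℝ => (Real.log x)⁻¹) MeasureTheory.volume a b :=
  (invlog_contOn.mono (uIcc_subset ha hb)).intervalIntegrable

/-- `∫_a^b dx/log x ≤ (b-a)/log a` for `2 ≤ a ≤ b`. -/
lemma invlog_integral_le {a b : ℝ} (ha : 2 ≤ a) (hab : a ≤ b) :
    ∫ x in a..b, (Real.log x)⁻¹ ≤ (b - a) * (Real.log a)⁻¹ := by
  have h := intervalIntegral.integral_mono_on (μ := MeasureTheory.volume) hab
    (invlog_int ha (ha.trans hab))
    (_root_.intervalIntegrable_const (c := (Real.log a)⁻¹))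
    (fun x hx => by
      have hx2 : 2 ≤ x := ha.trans hx.1
      exact inv_anti₀ (log_pos2 ha) (Real.log_le_log (by linarith) hx.1))
  simpa using h

/-- `∫₂^M dx/log x ≤ 8 M / log M` for `M ≥ 2`. -/
lemma li_bound {M : ℝ} (hM : 2 ≤ M) :
    (∫ x in (2:ℝ)..M, (Real.log x)⁻¹) ≤ 8 * M / Real.log M := by
  have hlog2 : (0.6931 : ℝ) < Real.log 2 := by
    have := Real.log_two_gt_d9; linarith
  have hlogM : 0 < Real.log M := log_pos2 hM
  rcases le_or_gt M 16 with h16 | h16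
  · have h1 : (∫ x in (2:ℝ)..M, (Real.log x)⁻¹) ≤ (M - 2) * (Real.log 2)⁻¹ :=
      invlog_integral_le le_rfl hM
    have hlogM16 : Real.log M ≤ 4 * Real.log 2 := by
      have h := Real.log_le_log (by linarith : (0:ℝ) < M) h16
      have h16' : Real.log 16 = 4 * Real.log 2 := by
        rw [show (16:ℝ) = 2 ^ (4:ℕ) by norm_num, Real.log_pow]; push_cast; ring
      linarith
    refine h1.trans ?_
    rw [div_eq_mul_inv, ← sub_nonneg]
    have e1 : 8 * M * (Real.log M)⁻¹ - (M - 2) * (Real.log 2)⁻¹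
        = (8 * M * Real.log 2 - (M - 2) * Real.log M) / (Real.log M * Real.log 2) := by
      field_simp
    rw [e1]
    apply div_nonneg _ (by positivity)
    nlinarith [hlogM, hlog2, hM]
  · have hsM : 2 ≤ Real.sqrt M := by
      rw [show (2:ℝ) = Real.sqrt 4 by rw [show (4:ℝ) = 2^2 by norm_num, Real.sqrt_sq]; norm_num]
      exact Real.sqrt_le_sqrt (by linarith)
    have hsMle : Real.sqrt M ≤ M := by
      have h' : Real.sqrt M ≤ Real.sqrt (M * M) := Real.sqrt_le_sqrt (by nlinarith)
      rwa [Real.sqrt_mul_self (by linarith)] at h'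
    have hM0 : (0:ℝ) ≤ M := by linarith
    have hsq : Real.sqrt M * Real.sqrt M = M := Real.mul_self_sqrt hM0
    have hlogs : Real.log (Real.sqrt M) = Real.log M / 2 := Real.log_sqrt hM0
    have hsplit : (∫ x in (2:ℝ)..M, (Real.log x)⁻¹)
        = (∫ x in (2:ℝ)..(Real.sqrt M), (Real.log x)⁻¹)
          + ∫ x in (Real.sqrt M)..M, (Real.log x)⁻¹ :=
      (intervalIntegral.integral_add_adjacent_intervals
        (invlog_int le_rfl hsM) (invlog_int hsM (hsM.trans hsMle))).symm
    have h1 : (∫ x in (2:ℝ)..(Real.sqrt M), (Real.log x)⁻¹)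
        ≤ (Real.sqrt M - 2) * (Real.log 2)⁻¹ := invlog_integral_le le_rfl hsM
    have h2 : (∫ x in (Real.sqrt M)..M, (Real.log x)⁻¹)
        ≤ (M - Real.sqrt M) * (Real.log (Real.sqrt M))⁻¹ := invlog_integral_le hsM hsMle
    rw [hsplit]
    have hlogM2s : Real.log M ≤ 2 * Real.sqrt M := by
      have := Real.log_le_sub_one_of_pos (show (0:ℝ) < Real.sqrt M by linarith)
      rw [hlogs] at this
      linarith
    have b1 : (Real.sqrt M - 2) * (Real.log 2)⁻¹ ≤ 3 * M / Real.log M := by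
      rw [div_eq_mul_inv, ← sub_nonneg]
      have e1 : 3 * M * (Real.log M)⁻¹ - (Real.sqrt M - 2) * (Real.log 2)⁻¹
          = (3 * M * Real.log 2 - (Real.sqrt M - 2) * Real.log M) / (Real.log M * Real.log 2) := by
        field_simp
      rw [e1]
      apply div_nonneg _ (by positivity)
      nlinarith [Real.sqrt_nonneg M, hlogM, hlog2]
    have b2 : (M - Real.sqrt M) * (Real.log (Real.sqrt M))⁻¹ ≤ 5 * M / Real.log M := by
      rw [hlogs, ← sub_nonneg]
      have e1 : 5 * M / Real.log M - (M - Real.sqrt M) * (Real.log M / 2)⁻¹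
          = (5 * M - 2 * (M - Real.sqrt M)) / Real.log M := by
        field_simp
      rw [e1]
      apply div_nonneg _ (le_of_lt hlogM)
      nlinarith [Real.sqrt_nonneg M]
    calc _ ≤ 3 * M / Real.log M + 5 * M / Real.log M := add_le_add (h1.trans b1) (h2.trans b2)
      _ = 8 * M / Real.log M := by ring

/-- Trivial bound: `|∫₂^b f| ≤ ∫₂^b dx/log x`. -/
lemma trivial_bound {z b : ℝ} (hb : 2 ≤ b) :
    ‖∫ x in (2:ℝ)..b, f z x‖ ≤ ∫ x in (2:ℝ)..b, (Real.log x)⁻¹ := by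
  refine le_trans (intervalIntegral.norm_integral_le_integral_norm hb) (le_of_eq ?_)
  apply intervalIntegral.integral_congr
  intro x hx
  exact norm_f (uIcc_subset le_rfl hb hx)

lemma hasDeriv_invlog {x : ℝ} (hx : 2 ≤ x) :
    HasDerivAt (fun y : ℝ => (Real.log y)⁻¹) (-(x * Real.log x ^ 2)⁻¹) x := by
  have hx0 : x ≠ 0 := by linarith
  have hlog : Real.log x ≠ 0 := ne_of_gt (log_pos2 hx)
  have h2 := (Real.hasDerivAt_log hx0).inv hlog
  have h3 : -(x * Real.log x ^ 2)⁻¹ = -x⁻¹ / Real.log x ^ 2 := by ring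
  rw [h3]; exact h2

/-- Integration-by-parts bound on `[a,b] ⊆ [2,∞)`. -/
lemma ibp_bound {z a b : ℝ} (hz : z ≠ 0) (ha : 2 ≤ a) (hab : a ≤ b) :
    ‖∫ x in a..b, f z x‖ ≤ 1 / (Real.pi * |z| * Real.log a) := by
  have hb : 2 ≤ b := ha.trans hab
  have hpi : (0:ℝ) < Real.pi := Real.pi_pos
  have hzabs : 0 < |z| := abs_pos.mpr hz
  have hla : 0 < Real.log a := log_pos2 ha
  have hlb : 0 < Real.log b := log_pos2 hb
  have hlab : Real.log a ≤ Real.log b := Real.log_le_log (by linarith) hab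
  set c : ℂ := ((2 * Real.pi * z : ℝ) : ℂ) * Complex.I with hc_def
  have hc : c ≠ 0 := by
    rw [hc_def]
    refine mul_ne_zero (Complex.ofReal_ne_zero.mpr ?_) Complex.I_ne_zero
    exact mul_ne_zero (mul_ne_zero two_ne_zero (ne_of_gt hpi)) hz
  have hcabs : ‖c‖ = 2 * Real.pi * |z| := by
    rw [hc_def, norm_mul, Complex.norm_I, Complex.norm_real, Real.norm_eq_abs, mul_one,
      abs_mul, abs_of_pos (by positivity : (0:ℝ) < 2 * Real.pi)]
  set u : ℝ → ℂ := fun x => ((Real.log x)⁻¹ : ℝ) with hu_def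
  set u' : ℝ → ℂ := fun x => ((-(x * Real.log x ^ 2)⁻¹ : ℝ) : ℂ) with hu'_def
  set v : ℝ → ℂ := fun x => Complex.exp (c * x) / c with hv_def
  set v' : ℝ → ℂ := fun x => Complex.exp (c * x) with hv'_def
  have hderivu : ∀ x ∈ Set.uIcc a b, HasDerivAt u (u' x) x := fun x hx =>
    (hasDeriv_invlog (uIcc_subset ha hb hx)).ofReal_comp
  have hderivv : ∀ x ∈ Set.uIcc a b, HasDerivAt v (v' x) x := by
    intro x _
    have h1 : HasDerivAt (fun w : ℂ => c * w) c ↑x := by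
      simpa using (hasDerivAt_id (x:ℂ)).const_mul c
    have h3 := (h1.cexp.comp_ofReal).div_const c
    simpa [hv_def, hv'_def, mul_div_assoc, div_self hc] using h3
  have hcontu' : ContinuousOn (fun x : ℝ => -(x * Real.log x ^ 2)⁻¹) (Set.Ici 2) := by
    apply ContinuousOn.neg
    apply ContinuousOn.inv₀
    · apply ContinuousOn.mul continuousOn_id
      apply ContinuousOn.pow
      apply Real.continuousOn_log.mono
      intro x hx
      simp only [Set.mem_Ici] at hx
      simp only [Set.mem_compl_iff, Set.mem_singleton_iff]
      intro h; rw [h] at hx; norm_num at hx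
    · intro x hx
      have hx2 : (2:ℝ) ≤ x := hx
      have := log_pos2 hx2
      positivity
  have hIntu' : IntervalIntegrable u' MeasureTheory.volume a b := by
    apply ContinuousOn.intervalIntegrable
    exact Complex.continuous_ofReal.comp_continuousOn
      (hcontu'.mono (uIcc_subset ha hb))
  have hIntv' : IntervalIntegrable v' MeasureTheory.volume a b := by
    apply Continuous.intervalIntegrable
    exact Complex.continuous_exp.comp (continuous_const.mul Complex.continuous_ofReal)
  have key : (∫ x in a..b, f z x) = ∫ x in a..b, u x * v' x := by
    apply intervalIntegral.integral_congr
    intro x _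
    show Complex.exp ((2 * Real.pi * z * x : ℝ) * Complex.I) / (Real.log x : ℂ)
      = ((Real.log x)⁻¹ : ℝ) * Complex.exp (c * x)
    have hcx : c * (x : ℂ) = ((2 * Real.pi * z * x : ℝ) : ℂ) * Complex.I := by
      rw [hc_def]; push_cast; ring
    rw [hcx, div_eq_mul_inv, mul_comm, Complex.ofReal_inv]
  rw [key, intervalIntegral.integral_mul_deriv_eq_deriv_mul hderivu hderivv hIntu' hIntv']
  have hvnorm : ∀ t : ℝ, ‖Complex.exp (c * t)‖ = 1 := by
    intro t
    have hct : c * (t : ℂ) = ((2 * Real.pi * z * t : ℝ) : ℂ) * Complex.I := by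
      rw [hc_def]; push_cast; ring
    rw [hct, Complex.norm_exp_ofReal_mul_I]
  have hbt : ∀ t : ℝ, 2 ≤ t → ‖u t * v t‖
      = (Real.log t)⁻¹ * (2 * Real.pi * |z|)⁻¹ := by
    intro t ht
    have hlt : 0 < Real.log t := log_pos2 ht
    rw [hu_def, hv_def]
    simp only [norm_mul, norm_div, hvnorm, hcabs, Complex.norm_real, Real.norm_eq_abs, one_div]
    rw [abs_of_pos (inv_pos.mpr hlt)]
  have hrem_eq : (∫ x in a..b, (x * Real.log x ^ 2)⁻¹)
      = (Real.log a)⁻¹ - (Real.log b)⁻¹ := by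
    have heq := intervalIntegral.integral_eq_sub_of_hasDerivAt
      (f := fun x : ℝ => -(Real.log x)⁻¹) (f' := fun x : ℝ => (x * Real.log x ^ 2)⁻¹)
      (a := a) (b := b) ?_ ?_
    · rw [heq]; ring
    · intro x hx
      have h := (hasDeriv_invlog (uIcc_subset ha hb hx)).neg
      simp only [neg_neg] at h
      exact h
    · apply ContinuousOn.intervalIntegrable
      refine ContinuousOn.mono ?_ (uIcc_subset ha hb)
      have := hcontu'.neg
      exact this.congr (fun x _ => by simp)
  have hrem : ‖∫ x in a..b, u' x * v x‖
      ≤ ((Real.log a)⁻¹ - (Real.log b)⁻¹) * (2 * Real.pi * |z|)⁻¹ := by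
    refine le_trans (intervalIntegral.norm_integral_le_integral_norm hab) ?_
    have congrnorm : (∫ x in a..b, ‖u' x * v x‖)
        = ∫ x in a..b, (x * Real.log x ^ 2)⁻¹ * (2 * Real.pi * |z|)⁻¹ := by
      apply intervalIntegral.integral_congr
      intro x hx
      have hx2 : 2 ≤ x := uIcc_subset ha hb hx
      have hlx : 0 < Real.log x := log_pos2 hx2
      show ‖u' x * v x‖ = _
      rw [hu'_def, hv_def]
      simp only [norm_mul, norm_div, hvnorm, hcabs,
        Complex.norm_real, Real.norm_eq_abs, abs_neg, one_div]
      rw [abs_of_pos (by positivity : (0:ℝ) < (x * Real.log x ^ 2)⁻¹)]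
    rw [congrnorm, intervalIntegral.integral_mul_const, hrem_eq]
  calc ‖u b * v b - u a * v a - ∫ x in a..b, u' x * v x‖
      ≤ ‖u b * v b‖ + ‖u a * v a‖
        + ‖∫ x in a..b, u' x * v x‖ := by
        refine le_trans (norm_sub_le _ _) ?_
        gcongr
        exact norm_sub_le _ _
    _ ≤ (Real.log b)⁻¹ * (2 * Real.pi * |z|)⁻¹ + (Real.log a)⁻¹ * (2 * Real.pi * |z|)⁻¹
        + ((Real.log a)⁻¹ - (Real.log b)⁻¹) * (2 * Real.pi * |z|)⁻¹ := by
        rw [hbt b hb, hbt a ha]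
        gcongr
    _ = 1 / (Real.pi * |z| * Real.log a) := by
        field_simp
        ring

end VinJ

/-- There is a constant `C > 0` such that for every integer `N ≥ 3`, with `r = ln N`:
`|J(z)| ≤ C·N/r` whenever `|z| ≤ 1/N`, and `|J(z)| ≤ C/(|z|·r)` whenever
`1/N < |z| ≤ N^(−1/2)`. -/
theorem vinogradovJ_bound :
    ∃ C : ℝ, 0 < C ∧ ∀ N : ℕ, 3 ≤ N → ∀ z : ℝ,
      (|z| ≤ 1 / N → ‖vinogradovJ N z‖ ≤ C * N / Real.log N) ∧
      (1 / N < |z| → |z| ≤ (N : ℝ) ^ (-(1 : ℝ) / 2) →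
        ‖vinogradovJ N z‖ ≤ C / (|z| * Real.log N)) := by
  refine ⟨20, by norm_num, fun N hN z => ?_⟩
  have hN3 : (3:ℝ) ≤ (N:ℝ) := by exact_mod_cast hN
  have hN2 : (2:ℝ) ≤ (N:ℝ) := by linarith
  have hN0 : (0:ℝ) < (N:ℝ) := by linarith
  have hlogN : 0 < Real.log N := VinJ.log_pos2 hN2
  have hJ : vinogradovJ N z = ∫ x in (2:ℝ)..(N:ℝ), VinJ.f z x := rfl
  constructor
  · intro _
    rw [hJ]
    refine le_trans (VinJ.trivial_bound hN2) (le_trans (VinJ.li_bound hN2) ?_)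
    rw [div_le_div_iff₀ hlogN hlogN]
    nlinarith
  · intro hz1 hz2
    have hz0 : z ≠ 0 := by
      intro h
      rw [h, abs_zero] at hz1
      have : (0:ℝ) < 1 / N := by positivity
      linarith
    have hzabs : 0 < |z| := abs_pos.mpr hz0
    have hpi : (0:ℝ) < Real.pi := Real.pi_pos
    have hpi3 : (3:ℝ) < Real.pi := by
      have := Real.pi_gt_three; linarith
    have hsN0 : 0 < Real.sqrt N := Real.sqrt_pos.mpr hN0
    have hrpow : (N:ℝ) ^ (-(1:ℝ)/2) = (Real.sqrt N)⁻¹ := by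
      rw [neg_div, Real.rpow_neg (le_of_lt hN0), ← Real.sqrt_eq_rpow]
    have hzsqrt : |z| * Real.sqrt N ≤ 1 := by
      rw [hrpow] at hz2
      calc |z| * Real.sqrt N ≤ (Real.sqrt N)⁻¹ * Real.sqrt N := by
            exact mul_le_mul_of_nonneg_right hz2 (le_of_lt hsN0)
        _ = 1 := inv_mul_cancel₀ (ne_of_gt hsN0)
    rcases le_or_gt 5 N with hN5 | hN5
    · -- large N : split at √N
      have hN5' : (5:ℝ) ≤ (N:ℝ) := by exact_mod_cast hN5
      have hsN2 : 2 ≤ Real.sqrt N := by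
        rw [show (2:ℝ) = Real.sqrt 4 by
          rw [show (4:ℝ) = 2^2 by norm_num, Real.sqrt_sq]; norm_num]
        exact Real.sqrt_le_sqrt (by linarith)
      have hsNle : Real.sqrt N ≤ (N:ℝ) := by
        have h' : Real.sqrt N ≤ Real.sqrt ((N:ℝ) * N) := Real.sqrt_le_sqrt (by nlinarith)
        rwa [Real.sqrt_mul_self (le_of_lt hN0)] at h'
      have hlogs : Real.log (Real.sqrt N) = Real.log N / 2 := Real.log_sqrt (le_of_lt hN0)
      have hsplit : (∫ x in (2:ℝ)..(N:ℝ), VinJ.f z x)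
          = (∫ x in (2:ℝ)..(Real.sqrt N), VinJ.f z x)
            + ∫ x in (Real.sqrt N)..(N:ℝ), VinJ.f z x :=
        (intervalIntegral.integral_add_adjacent_intervals
          (VinJ.f_int le_rfl hsN2) (VinJ.f_int hsN2 hN2)).symm
    
      have hA : ‖∫ x in (2:ℝ)..(Real.sqrt N), VinJ.f z x‖
          ≤ 16 / (|z| * Real.log N) := by
        refine le_trans (VinJ.trivial_bound hsN2) (le_trans (VinJ.li_bound hsN2) ?_)
        rw [hlogs]
        rw [div_le_div_iff₀ (by linarith) (by positivity)]
        nlinarith [mul_nonneg (sub_nonneg.mpr hzsqrt) (le_of_lt hlogN),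
          Real.sqrt_nonneg (N:ℝ)]
      have hB : ‖∫ x in (Real.sqrt N)..(N:ℝ), VinJ.f z x‖
          ≤ 4 / (|z| * Real.log N) := by
        refine le_trans (VinJ.ibp_bound hz0 hsN2 hsNle) ?_
        rw [hlogs]
        rw [div_le_div_iff₀ (by positivity) (by positivity)]
        nlinarith [mul_pos hzabs hlogN]
      rw [hJ, hsplit]
      calc ‖_‖ ≤ ‖∫ x in (2:ℝ)..(Real.sqrt N), VinJ.f z x‖
            + ‖∫ x in (Real.sqrt N)..(N:ℝ), VinJ.f z x‖ :=
          norm_add_le _ _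
        _ ≤ 16 / (|z| * Real.log N) + 4 / (|z| * Real.log N) := add_le_add hA hB
        _ = 20 / (|z| * Real.log N) := by ring
    · -- small N (N = 3 or 4) : direct integration by parts on [2, N]
      have hN4 : (N:ℝ) ≤ 4 := by
        have : N ≤ 4 := by omega
        exact_mod_cast this
      have hlog2 : (0:ℝ) < Real.log 2 := Real.log_pos (by norm_num)
      have hlogN4 : Real.log N ≤ 2 * Real.log 2 := by
        have h := Real.log_le_log hN0 hN4
        have h4 : Real.log 4 = 2 * Real.log 2 := by
          rw [show (4:ℝ) = 2 ^ (2:ℕ) by norm_num, Real.log_pow]; push_cast; ring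
        linarith
      rw [hJ]
      refine le_trans (VinJ.ibp_bound hz0 le_rfl hN2) ?_
      rw [div_le_div_iff₀ (by positivity) (by positivity)]
      nlinarith [mul_pos hzabs hlog2, mul_pos hzabs hlogN,
        mul_pos (mul_pos hzabs hlog2) hpi]
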